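/- Let K = Matrix.fromBlocks 0 B C D, where the upper-left block is the n×n zero matrix, D : Matrix (Fin m) (Fin m) ℂ is normal (IsStarNormal), B : Matrix (Fin n) (Fin m) ℂ and C : Matrix (Fin m) (Fin n) ℂ, with n, m ≥ 1. Let ρ(D) := the maximum of |μ| over eigenvalues μ ∈ spectrum ℂ D. Then every eigenvalue λ ∈ spectrum ℂ K satisfies |λ| ≤ (ρ(D) + Real.sqrt (ρ(D)^2 + 4·‖B‖·‖C‖)) / 2, where ‖·‖ is the ℓ²-operator norm. -/

import Mathlib

open Matrix
open scoped Matrix.Norms.L2Operator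

/-- The ℓ²-operator norm of a (rectangular) complex matrix: the operator norm of
the induced linear map between Euclidean spaces. -/
noncomputable def l2OpNorm {m n : Type*} [Fintype m] [Fintype n] [DecidableEq n]
    (M : Matrix m n ℂ) : ℝ :=
  ‖LinearMap.toContinuousLinearMap (Matrix.toEuclideanLin M)‖

lemma isStarNormal_units_inv {R : Type*} [Monoid R] [StarMul R] (u : Rˣ)
    (h : IsStarNormal (u : R)) : IsStarNormal (↑u⁻¹ : R) := by
  constructor
  show star (↑u⁻¹ : R) * ↑u⁻¹ = ↑u⁻¹ * star (↑u⁻¹ : R)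
  have h1 : (star u) * u = u * star u := Units.ext (by simpa using h.star_comm_self.eq)
  have h2 := congrArg (fun w : Rˣ => ((w⁻¹ : Rˣ) : R)) h1
  simpa [_root_.mul_inv_rev] using h2.symm

theorem specRadius_fromBlocks_zero_quadratic {n m : ℕ} (hn : 1 ≤ n) (hm : 1 ≤ m)
    (B : Matrix (Fin n) (Fin m) ℂ) (C : Matrix (Fin m) (Fin n) ℂ)
    (D : Matrix (Fin m) (Fin m) ℂ) (hD : IsStarNormal D)
    (ρD : ℝ) (hρD : IsGreatest ((fun z : ℂ => ‖z‖) '' spectrum ℂ D) ρD)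
    (lam : ℂ)
    (hK : lam ∈ spectrum ℂ (Matrix.fromBlocks (0 : Matrix (Fin n) (Fin n) ℂ) B C D)) :
    ‖lam‖ ≤ (ρD + Real.sqrt (ρD ^ 2 + 4 * (l2OpNorm B * l2OpNorm C))) / 2 := by
  classical
  obtain ⟨z0, hz0, hz0abs⟩ := hρD.1
  have hρ0 : 0 ≤ ρD := hz0abs ▸ norm_nonneg z0
  set t := ‖lam‖ with htdef
  have hBnn : (0:ℝ) ≤ l2OpNorm B := norm_nonneg _
  have hCnn : (0:ℝ) ≤ l2OpNorm C := norm_nonneg _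
  set s := Real.sqrt (ρD ^ 2 + 4 * (l2OpNorm B * l2OpNorm C)) with hsdef
  have hsq : s ^ 2 = ρD ^ 2 + 4 * (l2OpNorm B * l2OpNorm C) :=
    Real.sq_sqrt (by positivity)
  have hsnn : 0 ≤ s := Real.sqrt_nonneg _
  by_cases hle : t ≤ ρD
  · have hρs : ρD ≤ s := by
      nlinarith [hsq, hsnn, hρ0, hBnn, hCnn, sq_nonneg (s - ρD), sq_nonneg (s + ρD)]
    linarith
  push_neg at hle
  -- main case : ρD < t
  have key : t * (t - ρD) ≤ l2OpNorm B * l2OpNorm C := by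
    -- eigenvector
    set K := Matrix.fromBlocks (0 : Matrix (Fin n) (Fin n) ℂ) B C D with hKdef
    rw [spectrum.mem_iff] at hK
    have hdet : (algebraMap ℂ (Matrix (Fin n ⊕ Fin m) (Fin n ⊕ Fin m) ℂ) lam - K).det = 0 := by
      by_contra h
      exact hK ((Matrix.isUnit_iff_isUnit_det _).2 (isUnit_iff_ne_zero.2 h))
    obtain ⟨v, hv0, hv⟩ := Matrix.exists_mulVec_eq_zero_iff.2 hdet
    have hKv : K *ᵥ v = lam • v := by
      rw [Algebra.algebraMap_eq_smul_one, Matrix.sub_mulVec, sub_eq_zero] at hv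
      rw [← hv, Matrix.smul_mulVec, Matrix.one_mulVec]
    set x : Fin n → ℂ := v ∘ Sum.inl with hxdef
    set y : Fin m → ℂ := v ∘ Sum.inr with hydef
    have hsplit := Matrix.fromBlocks_mulVec (0 : Matrix (Fin n) (Fin n) ℂ) B C D v
    have hsum : lam • v = Sum.elim ((0 : Matrix (Fin n) (Fin n) ℂ) *ᵥ x + B *ᵥ y)
        (C *ᵥ x + D *ᵥ y) := hKv.symm.trans hsplit
    have eq1 : B *ᵥ y = lam • x := by
      funext i
      have h := congrFun hsum (Sum.inl i)
      have h' := h.symm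
      simp [Matrix.zero_mulVec] at h'
      exact h'
    have eq2 : C *ᵥ x + D *ᵥ y = lam • y := by
      funext j
      have h := congrFun hsum (Sum.inr j)
      have h' := h.symm
      simp at h'
      exact h'
    -- the resolvent of D at lam
    have hlamD : lam ∉ spectrum ℂ D := by
      intro h
      exact absurd (hρD.2 ⟨lam, h, rfl⟩) (not_le.2 hle)
    obtain ⟨u, hu⟩ := spectrum.notMem_iff.1 hlamD
    set M := algebraMap ℂ (Matrix (Fin m) (Fin m) ℂ) lam - D with hMdef
    -- M is star-normal
    have hDc : Commute (star D) D := hD.star_comm_self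
    haveI hMn : IsStarNormal M := by
      constructor
      have c1 : Commute (star D) M := by
        rw [hMdef, Algebra.algebraMap_eq_smul_one]
        exact (((Commute.one_right (star D)).smul_right lam).sub_right hDc)
      have c2 : Commute (star lam • (1 : Matrix (Fin m) (Fin m) ℂ)) M :=
        (Commute.one_left M).smul_left (star lam)
      have hMs : star M = star lam • (1 : Matrix (Fin m) (Fin m) ℂ) - star D := by
        rw [hMdef, Algebra.algebraMap_eq_smul_one]
        simp [star_smul]
      rw [hMs]
      exact c2.sub_left c1
    haveI hun : IsStarNormal (↑u : Matrix (Fin m) (Fin m) ℂ) := hu ▸ hMn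
    haveI hinvn : IsStarNormal (↑u⁻¹ : Matrix (Fin m) (Fin m) ℂ) :=
      isStarNormal_units_inv u hun
    -- norm of resolvent
    have htρ : 0 < t - ρD := by linarith
    set r : NNReal := ⟨1 / (t - ρD), by positivity⟩ with hrdef
    have hspec : ∀ k ∈ spectrum ℂ (↑u⁻¹ : Matrix (Fin m) (Fin m) ℂ), ‖k‖₊ ≤ r := by
      intro k hk
      rw [← spectrum.map_inv u] at hk
      have hk' : k⁻¹ ∈ spectrum ℂ (↑u : Matrix (Fin m) (Fin m) ℂ) := Set.mem_inv.mp hk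
      rw [hu, hMdef, ← spectrum.singleton_sub_eq] at hk'
      obtain ⟨l', hl', d, hd, hsub⟩ := hk'
      rw [Set.mem_singleton_iff] at hl'
      rw [hl'] at hsub
      have hdb : ‖d‖ ≤ ρD := hρD.2 ⟨d, hd, rfl⟩
      have h1 : t - ρD ≤ ‖lam - d‖ := by
        have := norm_sub_norm_le lam d
        linarith
      have h1' : t - ρD ≤ ‖k⁻¹‖ := by rw [← hsub]; simpa using h1
      by_cases hk0 : k = 0
      · simp [hk0]
      · rw [← NNReal.coe_le_coe, coe_nnnorm, hrdef]
        change ‖k‖ ≤ 1 / (t - ρD)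
        have hkinv : ‖k‖ = 1 / ‖k⁻¹‖ := by
          rw [norm_inv]; field_simp
        rw [hkinv]
        apply one_div_le_one_div_of_le htρ h1'
    have hnorm : ‖(↑u⁻¹ : Matrix (Fin m) (Fin m) ℂ)‖ ≤ 1 / (t - ρD) := by
      set T := Matrix.toEuclideanCLM (n := Fin m) (𝕜 := ℂ) (↑u⁻¹ : Matrix (Fin m) (Fin m) ℂ)
        with hTdef
      have hTspec : spectrum ℂ T = spectrum ℂ (↑u⁻¹ : Matrix (Fin m) (Fin m) ℂ) :=
        AlgEquiv.spectrum_eq (Matrix.toEuclideanCLM (n := Fin m) (𝕜 := ℂ)) _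
      haveI hTn : IsStarNormal T := by
        constructor
        show star T * T = T * star T
        rw [hTdef, ← map_star, ← _root_.map_mul, ← _root_.map_mul, hinvn.star_comm_self.eq]
      have hrad := IsStarNormal.spectralRadius_eq_nnnorm T
      have h2 : (‖T‖₊ : ENNReal) ≤ (r : ENNReal) := by
        rw [← hrad, spectralRadius]
        refine iSup₂_le fun k hk => ENNReal.coe_le_coe.2 ?_
        exact hspec k (hTspec ▸ hk)
      have h3 : ‖T‖₊ ≤ r := ENNReal.coe_le_coe.1 h2
      calc ‖(↑u⁻¹ : Matrix (Fin m) (Fin m) ℂ)‖ = ‖T‖ := Matrix.cstar_norm_def _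
        _ = (‖T‖₊ : ℝ) := (coe_nnnorm _).symm
        _ ≤ (r : ℝ) := NNReal.coe_le_coe.2 h3
        _ = 1 / (t - ρD) := by rw [hrdef]; rfl
    -- express y via the resolvent
    have hMy : M *ᵥ y = C *ᵥ x := by
      rw [hMdef, Matrix.sub_mulVec, Algebra.algebraMap_eq_smul_one, Matrix.smul_mulVec,
        Matrix.one_mulVec, ← eq2]
      simp
    have hy : y = (↑u⁻¹ : Matrix (Fin m) (Fin m) ℂ) *ᵥ (C *ᵥ x) := by
      calc y = (1 : Matrix (Fin m) (Fin m) ℂ) *ᵥ y := (Matrix.one_mulVec y).symm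
        _ = ((↑u⁻¹ * ↑u : Matrix (Fin m) (Fin m) ℂ)) *ᵥ y := by rw [u.inv_mul]
        _ = (↑u⁻¹ : Matrix (Fin m) (Fin m) ℂ) *ᵥ (M *ᵥ y) := by
            rw [← Matrix.mulVec_mulVec, hu]
        _ = (↑u⁻¹ : Matrix (Fin m) (Fin m) ℂ) *ᵥ (C *ᵥ x) := by rw [hMy]
    have hx0 : x ≠ 0 := by
      intro h
      apply hv0
      have hy0 : y = 0 := by rw [hy, h, Matrix.mulVec_zero, Matrix.mulVec_zero]
      funext i
      cases i with
      | inl i => exact congrFun h i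
      | inr j => exact congrFun hy0 j
    -- norm chain
    set xE : EuclideanSpace ℂ (Fin n) := (EuclideanSpace.equiv (Fin n) ℂ).symm x with hxE
    set yE : EuclideanSpace ℂ (Fin m) := (EuclideanSpace.equiv (Fin m) ℂ).symm y with hyE
    set zE : EuclideanSpace ℂ (Fin m) := (EuclideanSpace.equiv (Fin m) ℂ).symm (C *ᵥ x) with hzE
    have hBnorm : l2OpNorm B = ‖B‖ := rfl
    have hCnorm : l2OpNorm C = ‖C‖ := rfl
    have hA : t * ‖xE‖ ≤ ‖B‖ * ‖yE‖ := by
      have e1 : (EuclideanSpace.equiv (Fin n) ℂ).symm (B *ᵥ yE) = lam • xE := by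
        show (EuclideanSpace.equiv (Fin n) ℂ).symm (B *ᵥ y) = lam • xE
        rw [eq1]; rfl
      calc t * ‖xE‖ = ‖lam • xE‖ := by
            rw [norm_smul]
        _ = ‖(EuclideanSpace.equiv (Fin n) ℂ).symm (B *ᵥ yE)‖ := by rw [e1]
        _ ≤ ‖B‖ * ‖yE‖ := B.l2_opNorm_mulVec yE
    have hB2 : ‖yE‖ ≤ ‖(↑u⁻¹ : Matrix (Fin m) (Fin m) ℂ)‖ * ‖zE‖ := by
      have e2 : yE = (EuclideanSpace.equiv (Fin m) ℂ).symm
          ((↑u⁻¹ : Matrix (Fin m) (Fin m) ℂ) *ᵥ zE) := by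
        show yE = (EuclideanSpace.equiv (Fin m) ℂ).symm
          ((↑u⁻¹ : Matrix (Fin m) (Fin m) ℂ) *ᵥ (C *ᵥ x))
        rw [hyE, hy]
      rw [e2]
      exact (↑u⁻¹ : Matrix (Fin m) (Fin m) ℂ).l2_opNorm_mulVec zE
    have hC2 : ‖zE‖ ≤ ‖C‖ * ‖xE‖ := by
      have e3 : zE = (EuclideanSpace.equiv (Fin m) ℂ).symm (C *ᵥ xE) := rfl
      rw [e3]
      exact C.l2_opNorm_mulVec xE
    have hxpos : 0 < ‖xE‖ := by
      rw [norm_pos_iff]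
      intro h
      apply hx0
      funext i
      exact congrFun (congrArg (fun (w : EuclideanSpace ℂ (Fin n)) => (w : Fin n → ℂ)) h) i
    have hinvnn : 0 ≤ ‖(↑u⁻¹ : Matrix (Fin m) (Fin m) ℂ)‖ := norm_nonneg _
    have hchain : t * ‖xE‖ ≤ ‖B‖ * (‖(↑u⁻¹ : Matrix (Fin m) (Fin m) ℂ)‖ * (‖C‖ * ‖xE‖)) := by
      calc t * ‖xE‖ ≤ ‖B‖ * ‖yE‖ := hA
        _ ≤ ‖B‖ * (‖(↑u⁻¹ : Matrix (Fin m) (Fin m) ℂ)‖ * ‖zE‖) := by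
            apply mul_le_mul_of_nonneg_left hB2 (norm_nonneg _)
        _ ≤ ‖B‖ * (‖(↑u⁻¹ : Matrix (Fin m) (Fin m) ℂ)‖ * (‖C‖ * ‖xE‖)) := by
            apply mul_le_mul_of_nonneg_left
              (mul_le_mul_of_nonneg_left hC2 hinvnn) (norm_nonneg _)
    have ht2 : t ≤ ‖B‖ * ‖(↑u⁻¹ : Matrix (Fin m) (Fin m) ℂ)‖ * ‖C‖ := by
      have := hchain
      rw [show ‖B‖ * (‖(↑u⁻¹ : Matrix (Fin m) (Fin m) ℂ)‖ * (‖C‖ * ‖xE‖))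
          = (‖B‖ * ‖(↑u⁻¹ : Matrix (Fin m) (Fin m) ℂ)‖ * ‖C‖) * ‖xE‖ by ring] at this
      exact le_of_mul_le_mul_right this hxpos
    -- conclude
    rw [hBnorm, hCnorm]
    have h4 : ‖B‖ * ‖(↑u⁻¹ : Matrix (Fin m) (Fin m) ℂ)‖ * ‖C‖ ≤ ‖B‖ * ‖C‖ / (t - ρD) := by
      rw [div_eq_mul_one_div]
      calc ‖B‖ * ‖(↑u⁻¹ : Matrix (Fin m) (Fin m) ℂ)‖ * ‖C‖
          = ‖B‖ * ‖C‖ * ‖(↑u⁻¹ : Matrix (Fin m) (Fin m) ℂ)‖ := by ring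
        _ ≤ ‖B‖ * ‖C‖ * (1 / (t - ρD)) := by
            apply mul_le_mul_of_nonneg_left hnorm (by positivity)
    have h5 : t ≤ ‖B‖ * ‖C‖ / (t - ρD) := le_trans ht2 h4
    rw [le_div_iff₀ htρ] at h5
    linarith
  -- final arithmetic
  have hpos : 0 < 2 * t - ρD + s := by linarith
  nlinarith [key, hsq, hpos, hsnn, hρ0, hle]
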